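/- For n ≥ 2, let M be the n×n binary 2D string with M[i][j] = 1 if (i = j and i ≤ n−1) or j = n, and M[i][j] = 0 otherwise. Then for every 0 ≤ k ≤ n−2 and every 0 ≤ i ≤ n−k−2, the binary string 0^i·1·0^k·1·0^{n−k−i−2} (of length n) occurs as a substring of rlin(M); these n(n−1)/2 strings are pairwise distinct, so rlin(M) has at least n(n−1)/2 distinct substrings of length n and δ(rlin(M)) ≥ (n−1)/2. -/

import Mathlib

/-!
Statement 16: For `n ≥ 2`, let `M` be the `n × n` binary 2D string with
`M[i][j] = 1` iff (`i = j` and `i < n−1`, 0-based) or `j = n−1`.  Then for every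
`0 ≤ k ≤ n−2` and every `0 ≤ i ≤ n−k−2`, the binary string
`0^i · 1 · 0^k · 1 · 0^{n−k−i−2}` of length `n` (the string with `1` exactly at
positions `i` and `i+k+1`, 0-based) occurs as a substring of `rlin(M)`; these
`n(n−1)/2` strings are pairwise distinct, so `rlin(M)` has at least `n(n−1)/2`
distinct substrings of length `n`, and `δ(rlin(M)) ≥ (n−1)/2`.
-/

/-- Row-major linearization of an `n`-column 2D string (0-based). -/
def rlin {α : Type*} (M : ℕ → ℕ → α) (n : ℕ) : ℕ → α :=
  fun t => M (t / n) (t % n)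

/-- Number of distinct length-`len` substrings of the 1D string `S` of length `N`. -/
def numSubstr {α : Type*} [DecidableEq α] (S : ℕ → α) (N len : ℕ) : ℕ :=
  ((Finset.range (N - len + 1)).image (fun p => fun t : Fin len => S (p + t))).card

/-- `δ(S)` for a 1D string `S` of length `N`. -/
def delta1D {α : Type*} [DecidableEq α] (S : ℕ → α) (N : ℕ) : ℚ≥0 :=
  (Finset.Icc 1 N).sup (fun len => (numSubstr S N len : ℚ≥0) / ((len : ℕ) : ℚ≥0))

/-- The identity matrix bordered below by `0`'s and on the right by `1`'s (0-based). -/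
def idBordered (n : ℕ) : ℕ → ℕ → Bool :=
  fun i j => decide ((i = j ∧ i < n - 1) ∨ j = n - 1)

theorem statement16 (n : ℕ) (hn : 2 ≤ n) :
    (∀ k i, k ≤ n - 2 → i ≤ n - k - 2 →
      ∃ p, p + n ≤ n * n ∧
        ∀ t, t < n →
          rlin (idBordered n) n (p + t) = decide (t = i ∨ t = i + k + 1)) ∧
    (∀ k i k' i', k ≤ n - 2 → i ≤ n - k - 2 → k' ≤ n - 2 → i' ≤ n - k' - 2 →
      (∀ t, t < n →
        (decide (t = i ∨ t = i + k + 1) : Bool) =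
          decide (t = i' ∨ t = i' + k' + 1)) →
      k = k' ∧ i = i') ∧
    n * (n - 1) / 2 ≤ numSubstr (rlin (idBordered n) n) (n * n) n ∧
    ((n - 1 : ℕ) : ℚ≥0) / 2 ≤ delta1D (rlin (idBordered n) n) (n * n) := by
  have hn0 : 0 < n := by omega
  have main : ∀ k i, k ≤ n - 2 → i ≤ n - k - 2 →
      ∃ p, p + n ≤ n * n ∧ ∀ t, t < n →
        rlin (idBordered n) n (p + t) = decide (t = i ∨ t = i + k + 1) := by
    intro k i hk hi
    obtain ⟨r, hr1⟩ : ∃ r, r + k + 2 = n := ⟨n - k - 2, by omega⟩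
    obtain ⟨j, hij⟩ : ∃ j, i + j = r := ⟨r - i, by omega⟩
    refine ⟨r * n + j, ?_, ?_⟩
    · nlinarith [Nat.mul_le_mul_right n (show r + 2 ≤ n by omega)]
    · intro t ht
      rcases lt_or_ge (j + t) n with hc | hc
      · have e : r * n + j + t = n * r + (j + t) := by ring
        simp only [rlin, e, Nat.mul_add_div hn0, Nat.mul_add_mod,
          Nat.div_eq_of_lt hc, Nat.mod_eq_of_lt hc, idBordered]
        rw [decide_eq_decide]
        omega
      · obtain ⟨s, hs⟩ : ∃ s, j + t = n + s := ⟨j + t - n, by omega⟩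
        have hsn : s < n := by omega
        have e : r * n + j + t = n * (r + 1) + s := by
          rw [show n * (r + 1) = r * n + n from by ring]; omega
        simp only [rlin, e, Nat.mul_add_div hn0, Nat.mul_add_mod,
          Nat.div_eq_of_lt hsn, Nat.mod_eq_of_lt hsn, idBordered]
        rw [decide_eq_decide]
        omega
  have distinct : ∀ k i k' i', k ≤ n - 2 → i ≤ n - k - 2 → k' ≤ n - 2 → i' ≤ n - k' - 2 →
      (∀ t, t < n →
        (decide (t = i ∨ t = i + k + 1) : Bool) = decide (t = i' ∨ t = i' + k' + 1)) →
      k = k' ∧ i = i' := by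
    intro k i k' i' hk hi hk' hi' h
    have key : ∀ t, t < n → ((t = i ∨ t = i + k + 1) ↔ (t = i' ∨ t = i' + k' + 1)) := by
      intro t ht
      have := h t ht
      rwa [decide_eq_decide] at this
    have h1 := key i (by omega)
    have h2 := key i' (by omega)
    have h3 := key (i + k + 1) (by omega)
    have h4 := key (i' + k' + 1) (by omega)
    omega
  classical
  set S := rlin (idBordered n) n with hS
  have keysum : ∀ m : ℕ, 2 * ∑ k ∈ Finset.range m, (m - k) = m * (m + 1) := by
    intro m
    have h1 : ∑ k ∈ Finset.range m, (m - k) = ∑ k ∈ Finset.range m, (k + 1) := by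
      rw [← Finset.sum_range_reflect (fun k => k + 1) m]
      exact Finset.sum_congr rfl (fun k hk => by
        simp only [Finset.mem_range] at hk; omega)
    rw [two_mul]
    nth_rewrite 2 [h1]
    rw [← Finset.sum_add_distrib,
      Finset.sum_congr rfl (fun k hk => show (m - k) + (k + 1) = m + 1 by
        simp only [Finset.mem_range] at hk; omega),
      Finset.sum_const, Finset.card_range, smul_eq_mul]
  set D : Finset ((_ : ℕ) × ℕ) :=
    (Finset.range (n - 1)).sigma (fun k => Finset.range (n - 1 - k)) with hD
  have hDcard : 2 * D.card = (n - 1) * n := by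
    rw [hD, Finset.card_sigma]
    simp only [Finset.card_range]
    have := keysum (n - 1)
    rwa [show n - 1 + 1 = n from by omega] at this
  have hinj : D.card ≤ numSubstr S (n * n) n := by
    rw [numSubstr]
    apply Finset.card_le_card_of_injOn
      (fun q => fun t : Fin n => decide ((t : ℕ) = q.2 ∨ (t : ℕ) = q.2 + q.1 + 1))
    · intro q hq
      simp only [hD, Finset.mem_coe, Finset.mem_sigma, Finset.mem_range] at hq
      obtain ⟨p, hp, hw⟩ := main q.1 q.2 (by omega) (by omega)
      simp only [Finset.mem_coe, Finset.mem_image, Finset.mem_range]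
      refine ⟨p, Nat.lt_succ_of_le (Nat.le_sub_of_add_le hp), ?_⟩
      funext t
      exact hw t.1 t.2
    · intro q hq q' hq' hqq
      simp only [hD, Finset.coe_sigma, Set.mem_sigma_iff, Finset.mem_coe,
        Finset.mem_range] at hq hq'
      have h := distinct q.1 q.2 q'.1 q'.2 (by omega) (by omega) (by omega) (by omega)
        (fun t ht => congrFun hqq ⟨t, ht⟩)
      exact Sigma.ext h.1 (heq_of_eq h.2)
  have hNN : (n - 1) * n ≤ 2 * numSubstr S (n * n) n := by
    calc (n - 1) * n = 2 * D.card := hDcard.symm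
      _ ≤ 2 * numSubstr S (n * n) n := Nat.mul_le_mul_left 2 hinj
  have hcount : n * (n - 1) / 2 ≤ numSubstr S (n * n) n := by
    rw [Nat.mul_comm]
    calc (n - 1) * n / 2 ≤ 2 * numSubstr S (n * n) n / 2 := Nat.div_le_div_right hNN
      _ = numSubstr S (n * n) n := Nat.mul_div_cancel_left _ (by norm_num)
  refine ⟨main, distinct, hcount, ?_⟩
  have hmem : n ∈ Finset.Icc 1 (n * n) := by
    rw [Finset.mem_Icc]
    exact ⟨by omega, Nat.le_mul_of_pos_left n hn0⟩
  refine le_trans ?_ (Finset.le_sup (f := fun len =>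
    (numSubstr S (n * n) len : ℚ≥0) / ((len : ℕ) : ℚ≥0)) hmem)
  rw [div_le_div_iff₀ (by norm_num) (by exact_mod_cast hn0)]
  have h := (Nat.cast_le (α := ℚ≥0)).mpr hNN
  push_cast at h ⊢
  rwa [mul_comm 2 ((numSubstr S (n * n) n : ℚ≥0))] at h
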